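/- Let X be a linearly ordered set and u, v ultrafilters over X. Then u ≡ v if and only if either u = v, or u and v are both non-principal and either (I_u ∈ u, I_v ∈ v and I_u = I_v) or (J_u ∈ u, J_v ∈ v and J_u = J_v). -/

import Mathlib

/-- The ultrafilter extension of a binary relation `R` on `X`:
`u R̃ v` iff `{x | {y | R x y} ∈ v} ∈ u`. -/
def relExt {X : Type*} (R : X → X → Prop) (u v : Ultrafilter X) : Prop :=
  {x : X | {y : X | R x y} ∈ v} ∈ u

/-- `I_u`: the intersection of all downward closed sets belonging to `u`. -/
def Iset {X : Type*} [LinearOrder X] (u : Ultrafilter X) : Set X :=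
  ⋂₀ {I : Set X | I ∈ u ∧ ∀ ⦃a b : X⦄, a ≤ b → b ∈ I → a ∈ I}

/-- `J_u`: the intersection of all upward closed sets belonging to `u`. -/
def Jset {X : Type*} [LinearOrder X] (u : Ultrafilter X) : Set X :=
  ⋂₀ {J : Set X | J ∈ u ∧ ∀ ⦃a b : X⦄, a ≤ b → a ∈ J → b ∈ J}

/-- The ultrafilter extension of a binary operation `F` on `X`. -/
def opExt {X : Type*} (F : X → X → X) (u v : Ultrafilter X) : Ultrafilter X :=
  u.bind (fun x => v.map (F x))

section
variable {X : Type*} [LinearOrder X] (u v : Ultrafilter X)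

lemma Iset_subset' {D : Set X} (h1 : D ∈ u) (h2 : ∀ ⦃a b : X⦄, a ≤ b → b ∈ D → a ∈ D) :
    Iset u ⊆ D := Set.sInter_subset_of_mem ⟨h1, h2⟩

lemma Jset_subset' {D : Set X} (h1 : D ∈ u) (h2 : ∀ ⦃a b : X⦄, a ≤ b → a ∈ D → b ∈ D) :
    Jset u ⊆ D := Set.sInter_subset_of_mem ⟨h1, h2⟩

lemma subset_Iset' {D : Set X} (h1 : D ∉ u) (h2 : ∀ ⦃a b : X⦄, a ≤ b → b ∈ D → a ∈ D) :
    D ⊆ Iset u := by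
  intro x hx
  intro D' hD'
  by_contra hx'
  refine h1 (u.toFilter.mem_of_superset hD'.1 ?_)
  intro y hy
  rcases le_total x y with h | h
  · exact absurd (hD'.2 h hy) hx'
  · exact h2 h hx

lemma subset_Jset' {D : Set X} (h1 : D ∉ u) (h2 : ∀ ⦃a b : X⦄, a ≤ b → a ∈ D → b ∈ D) :
    D ⊆ Jset u := by
  intro x hx
  intro D' hD'
  by_contra hx'
  refine h1 (u.toFilter.mem_of_superset hD'.1 ?_)
  intro y hy
  rcases le_total y x with h | h
  · exact absurd (hD'.2 h hy) hx'
  · exact h2 h hx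

lemma mem_Iset_iff {x : X} : x ∈ Iset u ↔ {y | x ≤ y} ∈ u := by
  constructor
  · intro hx
    by_contra h
    have hc : {y : X | y < x} ∈ u := by
      have := (Ultrafilter.compl_mem_iff_notMem).2 h
      convert this using 1
      ext y; simp [not_le]
    have : Iset u ⊆ {y : X | y < x} :=
      Iset_subset' u hc (fun a b hab hb => lt_of_le_of_lt hab hb)
    exact lt_irrefl x (this hx)
  · intro h D hD
    obtain ⟨d, hd1, hd2⟩ := Ultrafilter.nonempty_of_mem (f := u) (Filter.inter_mem hD.1 h)
    exact hD.2 hd2 hd1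

lemma mem_Jset_iff {x : X} : x ∈ Jset u ↔ {y | y ≤ x} ∈ u := by
  constructor
  · intro hx
    by_contra h
    have hc : {y : X | x < y} ∈ u := by
      have := (Ultrafilter.compl_mem_iff_notMem).2 h
      convert this using 1
      ext y; simp [not_le]
    have : Jset u ⊆ {y : X | x < y} :=
      Jset_subset' u hc (fun a b hab hb => lt_of_lt_of_le hb hab)
    exact lt_irrefl x (this hx)
  · intro h D hD
    obtain ⟨d, hd1, hd2⟩ := Ultrafilter.nonempty_of_mem (f := u) (Filter.inter_mem hD.1 h)
    exact hD.2 hd2 hd1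

lemma mem_Jset_of_not_mem_Iset {x : X} (h : x ∉ Iset u) : x ∈ Jset u := by
  simp only [Iset, Set.mem_sInter, Set.mem_setOf_eq, not_forall] at h
  obtain ⟨D, ⟨hDu, hDd⟩, hx⟩ := h
  have h1 : Dᶜ ∉ u := by
    rw [Ultrafilter.compl_mem_iff_notMem]; simpa using hDu
  exact subset_Jset' u h1 (fun a b hab ha hb => ha (hDd hab hb)) hx

lemma pure_of_mem_both {x : X} (h1 : x ∈ Iset u) (h2 : x ∈ Jset u) : u = pure x := by
  rw [mem_Iset_iff] at h1
  rw [mem_Jset_iff] at h2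
  have hs : {x} ∈ u := by
    have := Filter.inter_mem h1 h2
    convert (show _ ∈ u from this) using 1
    ext y; simp only [Set.mem_singleton_iff, Set.mem_inter_iff, Set.mem_setOf_eq]
    constructor
    · rintro rfl; exact ⟨le_refl _, le_refl _⟩
    · rintro ⟨hy1, hy2⟩; exact le_antisymm hy2 hy1
  obtain ⟨y, hy, hu⟩ := Ultrafilter.eq_pure_of_finite_mem (Set.finite_singleton x) hs
  rwa [Set.mem_singleton_iff.1 hy] at hu

lemma Jset_eq_compl (hu : ¬ ∃ x : X, u = pure x) : Jset u = (Iset u)ᶜ := by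
  ext x
  constructor
  · intro hJ hI
    exact hu ⟨x, pure_of_mem_both u hI hJ⟩
  · intro hI
    exact mem_Jset_of_not_mem_Iset u hI

variable {X : Type*} [LinearOrder X] (u v : Ultrafilter X)

lemma down_Iset : ∀ ⦃a b : X⦄, a ≤ b → b ∈ Iset u → a ∈ Iset u := by
  intro a b hab hb D hD
  exact hD.2 hab (hb D hD)

lemma relExt_le_iff : relExt (· ≤ ·) u v ↔ Iset v ∈ u := by
  unfold relExt
  have : {x : X | {y : X | x ≤ y} ∈ v} = Iset v := by
    ext x; exact (mem_Iset_iff v).symm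
  rw [this]

lemma relExt_ge_iff : relExt (· ≥ ·) v u ↔ Jset u ∈ v := by
  unfold relExt
  have : {x : X | {y : X | x ≥ y} ∈ u} = Jset u := by
    ext x; exact (mem_Jset_iff u).symm
  rw [this]

lemma Iset_pure (a : X) : Iset (pure a : Ultrafilter X) = {y | y ≤ a} := by
  ext y; rw [mem_Iset_iff]; simp [Ultrafilter.mem_pure]

lemma Jset_pure (a : X) : Jset (pure a : Ultrafilter X) = {y | a ≤ y} := by
  ext y; rw [mem_Jset_iff]; simp [Ultrafilter.mem_pure]

end

/-- Characterization of the equivalence `≡` in terms of supports. -/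
theorem stmt12 {X : Type*} [LinearOrder X] (u v : Ultrafilter X) :
    (((relExt (· ≤ ·) u v ∨ relExt (· ≥ ·) v u) ∧
      (relExt (· ≤ ·) v u ∨ relExt (· ≥ ·) u v)) ↔
      (u = v ∨
        ((¬ ∃ x : X, u = pure x) ∧ (¬ ∃ x : X, v = pure x) ∧
          ((Iset u ∈ u ∧ Iset v ∈ v ∧ Iset u = Iset v) ∨
           (Jset u ∈ u ∧ Jset v ∈ v ∧ Jset u = Jset v))))) := by
  rw [relExt_le_iff u v, relExt_ge_iff v u, relExt_le_iff v u, relExt_ge_iff u v]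
  constructor
  · rintro ⟨h1, h2⟩
    by_cases huv : u = v
    · exact Or.inl huv
    right
    have hu : ¬ ∃ x : X, u = pure x := by
      rintro ⟨a, rfl⟩
      have hv1 : {y : X | a ≤ y} ∈ v := by
        rcases h1 with h | h
        · exact (mem_Iset_iff v).1 (Ultrafilter.mem_pure.1 h)
        · rwa [Jset_pure] at h
      have hv2 : {y : X | y ≤ a} ∈ v := by
        rcases h2 with h | h
        · rwa [Iset_pure] at h
        · exact (mem_Jset_iff v).1 (Ultrafilter.mem_pure.1 h)
      exact huv (pure_of_mem_both v ((mem_Iset_iff v).2 hv1)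
        ((mem_Jset_iff v).2 hv2)).symm
    have hv : ¬ ∃ x : X, v = pure x := by
      rintro ⟨b, rfl⟩
      have hu1 : {y : X | y ≤ b} ∈ u := by
        rcases h1 with h | h
        · rwa [Iset_pure] at h
        · exact (mem_Jset_iff u).1 (Ultrafilter.mem_pure.1 h)
      have hu2 : {y : X | b ≤ y} ∈ u := by
        rcases h2 with h | h
        · exact (mem_Iset_iff u).1 (Ultrafilter.mem_pure.1 h)
        · rwa [Jset_pure] at h
      exact huv (pure_of_mem_both u ((mem_Iset_iff u).2 hu2)
        ((mem_Jset_iff u).2 hu1))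
    have hJu := Jset_eq_compl u hu
    have hJv := Jset_eq_compl v hv
    rw [hJu, Ultrafilter.compl_mem_iff_notMem] at h1
    rw [hJv, Ultrafilter.compl_mem_iff_notMem] at h2
    have hiff : Iset u ∈ v ↔ Iset v ∈ u :=
      ⟨fun h => h1.resolve_right (not_not_intro h),
       fun h => h2.resolve_right (not_not_intro h)⟩
    have hEq : Iset u = Iset v := by
      by_cases hA : Iset u ∈ v
      · exact subset_antisymm (Iset_subset' u (hiff.1 hA) (down_Iset v))
          (Iset_subset' v hA (down_Iset u))
      · exact subset_antisymm (subset_Iset' v hA (down_Iset u))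
          (subset_Iset' u (fun h => hA (hiff.2 h)) (down_Iset v))
    refine ⟨hu, hv, ?_⟩
    by_cases hAu : Iset u ∈ u
    · left
      have hvu : Iset v ∈ u := hEq ▸ hAu
      exact ⟨hAu, hEq ▸ hiff.2 hvu, hEq⟩
    · right
      have hAv : Iset v ∉ v := by
        intro h
        have : Iset u ∈ v := hEq ▸ h
        exact hAu (hEq ▸ hiff.1 this)
      refine ⟨?_, ?_, by rw [hJu, hJv, hEq]⟩
      · rw [hJu]; exact Ultrafilter.compl_mem_iff_notMem.2 hAu
      · rw [hJv]; exact Ultrafilter.compl_mem_iff_notMem.2 hAv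
  · rintro (rfl | ⟨hu, hv, ⟨h1, h2, he⟩ | ⟨h1, h2, he⟩⟩)
    · have : Iset u ∈ u ∨ Jset u ∈ u := by
        by_cases h : Iset u ∈ u
        · exact Or.inl h
        · right
          exact u.toFilter.mem_of_superset
            (Ultrafilter.compl_mem_iff_notMem.2 h)
            (fun x hx => mem_Jset_of_not_mem_Iset u hx)
      exact ⟨this, this⟩
    · exact ⟨Or.inl (he ▸ h1), Or.inl (he ▸ h2)⟩
    · exact ⟨Or.inr (he ▸ h2), Or.inr (he ▸ h1)⟩
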